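/- Let S_r, S_d, T_r, T_d be elements of the even subalgebra of Cl₄ satisfying S_r·reverse(S_d) + S_d·reverse(S_r) = 0 and T_r·reverse(T_d) + T_d·reverse(T_r) = 0. Then the components of the product pair, U_r = S_rT_r + S_dT_d and U_d = S_rT_d + S_dT_r, satisfy the same relation: U_r·reverse(U_d) + U_d·reverse(U_r) = 0. That is, the set of pairs of octonion-like numbers satisfying the orthogonality condition is closed under the split-bioctonion multiplication. -/
import Mathlib


open CliffordAlgebra

/-- The positive-definite quadratic form `Q₄(v) = v₀² + v₁² + v₂² + v₃²` on `ℝ⁴`. -/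
noncomputable def Q4 : QuadraticForm ℝ (Fin 4 → ℝ) :=
  QuadraticMap.weightedSumSquares ℝ (fun _ : Fin 4 => (1 : ℝ))

/-- The generators `e i` of the Clifford algebra `Cl₄ = Cl_{4,0}`. -/
noncomputable def e (i : Fin 4) : CliffordAlgebra Q4 :=
  CliffordAlgebra.ι Q4 (Pi.single i 1)

lemma e_sq (i : Fin 4) : e i * e i = 1 := by
  rw [e, ι_sq_scalar]
  have : Q4 (Pi.single i 1) = 1 := by
    fin_cases i <;>
      · simp (config := { decide := true }) [Q4, QuadraticMap.weightedSumSquares_apply,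
          Fin.sum_univ_four, Pi.single_apply]
  rw [this, map_one]

lemma e_swap {i j : Fin 4} (h : i ≠ j) : e j * e i = -(e i * e j) := by
  have := CliffordAlgebra.ι_mul_ι_add_swap (Q := Q4) (Pi.single j (1:ℝ)) (Pi.single i 1)
  have hp : QuadraticMap.polar Q4 (Pi.single j (1:ℝ)) (Pi.single i 1) = 0 := by
    fin_cases i <;> fin_cases j <;> first
      | exact absurd rfl h
      | · simp (config := { decide := true }) [QuadraticMap.polar, Q4,
            QuadraticMap.weightedSumSquares_apply, Fin.sum_univ_four, Pi.single_apply]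
          try ring
  rw [hp, map_zero] at this
  exact eq_neg_of_add_eq_zero_left this

lemma e_sq' (i : Fin 4) (x : CliffordAlgebra Q4) : e i * (e i * x) = x := by
  rw [← mul_assoc, e_sq, one_mul]

lemma e_swap' {i j : Fin 4} (h : i ≠ j) (x : CliffordAlgebra Q4) :
    e j * (e i * x) = -(e i * (e j * x)) := by
  rw [← mul_assoc, e_swap h, neg_mul, mul_assoc]

lemma s0 : e 0 * e 0 = 1 := e_sq 0
lemma s1 : e 1 * e 1 = 1 := e_sq 1
lemma s2 : e 2 * e 2 = 1 := e_sq 2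
lemma s3 : e 3 * e 3 = 1 := e_sq 3
lemma t0 (x : CliffordAlgebra Q4) : e 0 * (e 0 * x) = x := e_sq' 0 x
lemma t1 (x : CliffordAlgebra Q4) : e 1 * (e 1 * x) = x := e_sq' 1 x
lemma t2 (x : CliffordAlgebra Q4) : e 2 * (e 2 * x) = x := e_sq' 2 x
lemma t3 (x : CliffordAlgebra Q4) : e 3 * (e 3 * x) = x := e_sq' 3 x
lemma w10 : e 1 * e 0 = -(e 0 * e 1) := e_swap (by decide)
lemma w20 : e 2 * e 0 = -(e 0 * e 2) := e_swap (by decide)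
lemma w30 : e 3 * e 0 = -(e 0 * e 3) := e_swap (by decide)
lemma w21 : e 2 * e 1 = -(e 1 * e 2) := e_swap (by decide)
lemma w31 : e 3 * e 1 = -(e 1 * e 3) := e_swap (by decide)
lemma w32 : e 3 * e 2 = -(e 2 * e 3) := e_swap (by decide)
lemma u10 (x : CliffordAlgebra Q4) : e 1 * (e 0 * x) = -(e 0 * (e 1 * x)) := e_swap' (by decide) x
lemma u20 (x : CliffordAlgebra Q4) : e 2 * (e 0 * x) = -(e 0 * (e 2 * x)) := e_swap' (by decide) x
lemma u30 (x : CliffordAlgebra Q4) : e 3 * (e 0 * x) = -(e 0 * (e 3 * x)) := e_swap' (by decide) x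
lemma u21 (x : CliffordAlgebra Q4) : e 2 * (e 1 * x) = -(e 1 * (e 2 * x)) := e_swap' (by decide) x
lemma u31 (x : CliffordAlgebra Q4) : e 3 * (e 1 * x) = -(e 1 * (e 3 * x)) := e_swap' (by decide) x
lemma u32 (x : CliffordAlgebra Q4) : e 3 * (e 2 * x) = -(e 2 * (e 3 * x)) := e_swap' (by decide) x

noncomputable def ω : CliffordAlgebra Q4 := e 0 * (e 1 * (e 2 * e 3))

/-- generating set for the even subalgebra as a module -/
noncomputable def G : Set (CliffordAlgebra Q4) :=
  {1, e 0 * e 1, e 0 * e 2, e 0 * e 3, e 1 * e 2, e 1 * e 3, e 2 * e 3, ω}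

noncomputable def Sp : Submodule ℝ (CliffordAlgebra Q4) := Submodule.span ℝ G

lemma mem_G_one : (1 : CliffordAlgebra Q4) ∈ Sp := Submodule.subset_span (by left; rfl)
lemma mem01 : e 0 * e 1 ∈ Sp := Submodule.subset_span (by right; left; rfl)
lemma mem02 : e 0 * e 2 ∈ Sp := Submodule.subset_span (by right; right; left; rfl)
lemma mem03 : e 0 * e 3 ∈ Sp := Submodule.subset_span (by right; right; right; left; rfl)
lemma mem12 : e 1 * e 2 ∈ Sp := Submodule.subset_span (by right; right; right; right; left; rfl)
lemma mem13 : e 1 * e 3 ∈ Sp :=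
  Submodule.subset_span (by right; right; right; right; right; left; rfl)
lemma mem23 : e 2 * e 3 ∈ Sp :=
  Submodule.subset_span (by right; right; right; right; right; right; left; rfl)
lemma memω : ω ∈ Sp :=
  Submodule.subset_span (by right; right; right; right; right; right; right; rfl)

lemma mul_e_e_mem {x : CliffordAlgebra Q4} (hx : x ∈ Sp) (i j : Fin 4) :
    e i * (e j * x) ∈ Sp := by
  induction hx using Submodule.span_induction with
  | mem y hy =>
      have h0 := mem_G_one; have h1 := mem01; have h2 := mem02; have h3 := mem03
      have h4 := mem12; have h5 := mem13; have h6 := mem23; have h7 := memω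
      rw [ω] at h7
      rcases hy with rfl | rfl | rfl | rfl | rfl | rfl | rfl | rfl <;>
      fin_cases i <;> fin_cases j <;>
        simp only [Fin.reduceFinMk, Fin.isValue, ω, mul_one, one_mul, mul_assoc, mul_neg,
          neg_mul, neg_neg, s0, s1, s2, s3, t0, t1, t2, t3,
          w10, w20, w30, w21, w31, w32, u10, u20, u30, u21, u31, u32] <;>
        first
          | assumption
          | exact Submodule.neg_mem _ (by assumption)
  | zero => simpa using Submodule.zero_mem Sp
  | add a b _ _ ha hb => rw [mul_add, mul_add]; exact Submodule.add_mem _ ha hb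
  | smul r a _ ha =>
      rw [mul_smul_comm, mul_smul_comm]; exact Submodule.smul_mem _ _ ha

lemma ι_eq (m : Fin 4 → ℝ) : ι Q4 m = ∑ i : Fin 4, m i • e i := by
  have key : ∀ i : Fin 4, m i • e i = ι Q4 (Pi.single i (m i)) := by
    intro i
    have : Pi.single i (m i) = m i • (Pi.single i 1 : Fin 4 → ℝ) := by
      ext k
      by_cases h : k = i <;> simp [Pi.single_apply, h]
    rw [this, map_smul, e]
  simp_rw [key, ← map_sum, Finset.univ_sum_single]

lemma even_mem_Sp {x : CliffordAlgebra Q4} (hx : x ∈ evenOdd Q4 0) : x ∈ Sp := by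
  induction x, hx using even_induction with
  | algebraMap r =>
      rw [Algebra.algebraMap_eq_smul_one]
      exact Submodule.smul_mem _ _ mem_G_one
  | add x y hx hy ihx ihy => exact Submodule.add_mem _ ihx ihy
  | ι_mul_ι_mul m₁ m₂ x hx ih =>
      rw [mul_assoc, ι_eq m₁, ι_eq m₂, Finset.sum_mul]
      refine Submodule.sum_mem _ fun i _ => ?_
      rw [smul_mul_assoc]
      refine Submodule.smul_mem _ _ ?_
      rw [Finset.sum_mul, Finset.mul_sum]
      refine Submodule.sum_mem _ fun j _ => ?_
      rw [smul_mul_assoc, mul_smul_comm]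
      exact Submodule.smul_mem _ _ (mul_e_e_mem ih i j)

lemma ω_e (i : Fin 4) : ω * e i = -(e i * ω) := by
  fin_cases i <;>
    simp only [Fin.reduceFinMk, Fin.isValue, ω, mul_one, one_mul, mul_assoc, mul_neg,
      neg_mul, neg_neg, s0, s1, s2, s3, t0, t1, t2, t3,
      w10, w20, w30, w21, w31, w32, u10, u20, u30, u21, u31, u32]

lemma ω_ι (m : Fin 4 → ℝ) : ω * ι Q4 m = -(ι Q4 m * ω) := by
  rw [ι_eq, Finset.mul_sum, Finset.sum_mul, ← Finset.sum_neg_distrib]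
  refine Finset.sum_congr rfl fun i _ => ?_
  rw [mul_smul_comm, smul_mul_assoc, ω_e, smul_neg]

lemma ω_comm_even {x : CliffordAlgebra Q4} (hx : x ∈ evenOdd Q4 0) : ω * x = x * ω := by
  induction x, hx using even_induction with
  | algebraMap r => rw [Algebra.commutes]
  | add x y hx hy ihx ihy => rw [mul_add, add_mul, ihx, ihy]
  | ι_mul_ι_mul m₁ m₂ x hx ih =>
      have h : ω * (ι Q4 m₁ * ι Q4 m₂ * x) = ι Q4 m₁ * (ι Q4 m₂ * (ω * x)) := by
        rw [mul_assoc (ι Q4 m₁), ← mul_assoc ω, ω_ι m₁, neg_mul, mul_assoc,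
          ← mul_assoc ω, ω_ι m₂]
        simp only [neg_mul, mul_neg, neg_neg, mul_assoc]
      rw [h, ih]
      simp only [mul_assoc]

lemma rev_e (i : Fin 4) : reverse (e i) = e i := reverse_ι _

lemma sym_mem {Z : CliffordAlgebra Q4} (hZ : Z ∈ Sp) :
    Z + reverse Z ∈ Submodule.span ℝ ({1, ω} : Set (CliffordAlgebra Q4)) := by
  have h1 : (1 : CliffordAlgebra Q4) ∈ Submodule.span ℝ ({1, ω} : Set (CliffordAlgebra Q4)) :=
    Submodule.subset_span (by left; rfl)
  have hω : ω ∈ Submodule.span ℝ ({1, ω} : Set (CliffordAlgebra Q4)) :=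
    Submodule.subset_span (by right; rfl)
  induction hZ using Submodule.span_induction with
  | mem y hy =>
      rcases hy with rfl | rfl | rfl | rfl | rfl | rfl | rfl | rfl <;>
        · simp only [ω, reverse.map_mul, rev_e, reverse.map_one, mul_one, one_mul, mul_assoc,
            mul_neg, neg_mul, neg_neg, s0, s1, s2, s3, t0, t1, t2, t3,
            w10, w20, w30, w21, w31, w32, u10, u20, u30, u21, u31, u32, add_neg_cancel]
          first
            | exact Submodule.zero_mem _
            | exact Submodule.add_mem _ (by assumption) (by assumption)
  | zero => simpa using Submodule.zero_mem _
  | add a b _ _ ha hb =>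
      have : a + b + reverse (a + b) = (a + reverse a) + (b + reverse b) := by
        rw [map_add]; abel
      rw [this]; exact Submodule.add_mem _ ha hb
  | smul r a _ ha =>
      have : r • a + reverse (r • a) = r • (a + reverse a) := by
        rw [map_smul, smul_add]
      rw [this]; exact Submodule.smul_mem _ _ ha

lemma span1ω_comm {c : CliffordAlgebra Q4}
    (hc : c ∈ Submodule.span ℝ ({1, ω} : Set (CliffordAlgebra Q4)))
    {x : CliffordAlgebra Q4} (hx : x ∈ evenOdd Q4 0) : c * x = x * c := by
  induction hc using Submodule.span_induction with
  | mem y hy => rcases hy with rfl | rfl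
                · rw [one_mul, mul_one]
                · exact ω_comm_even hx
  | zero => rw [zero_mul, mul_zero]
  | add a b _ _ ha hb => rw [add_mul, mul_add, ha, hb]
  | smul r a _ ha => rw [smul_mul_assoc, mul_smul_comm, ha]

lemma revfix_comm {Z : CliffordAlgebra Q4} (hZ : Z ∈ evenOdd Q4 0) (h : reverse Z = Z)
    {x : CliffordAlgebra Q4} (hx : x ∈ evenOdd Q4 0) : Z * x = x * Z := by
  have h2 := sym_mem (even_mem_Sp hZ)
  rw [h] at h2
  have hZ' : Z = (2⁻¹ : ℝ) • (Z + Z) := by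
    rw [← two_smul ℝ Z, smul_smul]; norm_num
  refine span1ω_comm ?_ hx
  rw [hZ']
  exact Submodule.smul_mem _ _ h2

lemma even_mul {a b : CliffordAlgebra Q4} (ha : a ∈ evenOdd Q4 0) (hb : b ∈ evenOdd Q4 0) :
    a * b ∈ evenOdd Q4 0 := by
  have := SetLike.mul_mem_graded ha hb
  simpa using this

/-- The orthogonality condition defining the normed sedenion-like algebra is preserved
by the split-bioctonion product: if `S_r·S_d† + S_d·S_r† = 0` and
`T_r·T_d† + T_d·T_r† = 0`, then the components `U_r = S_rT_r + S_dT_d`,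
`U_d = S_rT_d + S_dT_r` of the product satisfy `U_r·U_d† + U_d·U_r† = 0`. -/
theorem orthogonality_closed_under_mul
    (Sr Sd Tr Td : CliffordAlgebra Q4)
    (hSr : Sr ∈ CliffordAlgebra.evenOdd Q4 0) (hSd : Sd ∈ CliffordAlgebra.evenOdd Q4 0)
    (hTr : Tr ∈ CliffordAlgebra.evenOdd Q4 0) (hTd : Td ∈ CliffordAlgebra.evenOdd Q4 0)
    (hS : Sr * reverse Sd + Sd * reverse Sr = 0)
    (hT : Tr * reverse Td + Td * reverse Tr = 0) :
    (Sr * Tr + Sd * Td) * reverse (Sr * Td + Sd * Tr) +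
      (Sr * Td + Sd * Tr) * reverse (Sr * Tr + Sd * Td) = 0 := by
  have hA_even : Tr * reverse Tr + Td * reverse Td ∈ evenOdd Q4 0 :=
    Submodule.add_mem _ (even_mul hTr ((reverse_mem_evenOdd_iff Q4).mpr hTr))
      (even_mul hTd ((reverse_mem_evenOdd_iff Q4).mpr hTd))
  have hA_rev : reverse (Tr * reverse Tr + Td * reverse Td)
      = Tr * reverse Tr + Td * reverse Td := by
    simp [reverse.map_mul, reverse_reverse]
  have hA_comm := fun {x} hx => revfix_comm hA_even hA_rev (x := x) hx
  have key : Sr * ((Tr * reverse Tr + Td * reverse Td) * reverse Sd)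
      + Sd * ((Tr * reverse Tr + Td * reverse Td) * reverse Sr) = 0 := by
    rw [hA_comm ((reverse_mem_evenOdd_iff Q4).mpr hSd), hA_comm ((reverse_mem_evenOdd_iff Q4).mpr hSr),
      ← mul_assoc, ← mul_assoc, ← add_mul, hS, zero_mul]
  have expand : (Sr * Tr + Sd * Td) * reverse (Sr * Td + Sd * Tr) +
      (Sr * Td + Sd * Tr) * reverse (Sr * Tr + Sd * Td)
      = Sr * ((Tr * reverse Td + Td * reverse Tr) * reverse Sr)
      + Sd * ((Tr * reverse Td + Td * reverse Tr) * reverse Sd)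
      + (Sr * ((Tr * reverse Tr + Td * reverse Td) * reverse Sd)
        + Sd * ((Tr * reverse Tr + Td * reverse Td) * reverse Sr)) := by
    simp only [map_add, reverse.map_mul]
    noncomm_ring
  rw [expand, hT, key]
  simp
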